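/- Let Λ : [0,∞) → [0,∞) be absolutely continuous on every compact subinterval of [0,∞), and let φ : [0,∞) → [0,∞) be locally integrable with sup_{t≥0} ∫_t^{t+1} φ(τ) dτ ≤ Q for some Q ≥ 0. Assume there exist K ≥ 0 and ε₀ > 0 such that for every ε ∈ (0, ε₀] the differential inequality Λ'(t) + ε·Λ(t) ≤ K·ε²·Λ(t)^{3/2} + ε^{−2/3}·φ(t) holds for almost every t ≥ 0. Then there exist R₁ > 0 and κ > 0 such that for every R ≥ 0, if Λ(0) ≤ R then Λ(t) ≤ R₁ for all t ≥ R^{1/κ}·(1 + κ·Q)^{−1}. -/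

import Mathlib

open MeasureTheory Set


private lemma sqrt_pow_eq (x : ℝ) (hx : 0 ≤ x) (n : ℕ) :
    Real.sqrt (x ^ n) = (Real.sqrt x) ^ n := by
  induction n with
  | zero => simp
  | succ n ih =>
    rw [pow_succ, pow_succ, Real.sqrt_mul (pow_nonneg hx n), ih]

private lemma phiB (φ : ℝ → ℝ) (hφnn : ∀ t, 0 ≤ t → 0 ≤ φ t)
    (hφint : ∀ s t : ℝ, 0 ≤ s → s ≤ t → IntervalIntegrable φ volume s t)
    (Q : ℝ) (hQ : 0 ≤ Q) (hφQ : ∀ t : ℝ, 0 ≤ t → (∫ τ in t..(t + 1), φ τ) ≤ Q) :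
    ∀ (n : ℕ) (u v : ℝ), 0 ≤ u → u ≤ v → v - u ≤ n → (∫ τ in u..v, φ τ) ≤ Q * (v - u + 1) := by
  intro n
  induction n with
  | zero =>
    intro u v hu huv h
    have hvu : v = u := le_antisymm (by norm_num at h; linarith) huv
    subst hvu
    rw [intervalIntegral.integral_same]
    nlinarith
  | succ n ih =>
    intro u v hu huv h
    by_cases hc : v ≤ u + 1
    · have h2 : 0 ≤ ∫ τ in v..(u+1), φ τ :=
        intervalIntegral.integral_nonneg hc (fun x hx => hφnn x (le_trans (hu.trans huv) hx.1))
      have hsplit : (∫ τ in u..v, φ τ) + (∫ τ in v..(u+1), φ τ) = ∫ τ in u..(u+1), φ τ :=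
        intervalIntegral.integral_add_adjacent_intervals (hφint u v hu huv)
          (hφint v (u+1) (hu.trans huv) hc)
      have hQ1 := hφQ u hu
      nlinarith
    · push_neg at hc
      have h1 := hφQ u hu
      have h2 := ih (u+1) v (by linarith) hc.le (by push_cast at h ⊢; linarith)
      have hsplit : (∫ τ in u..(u+1), φ τ) + (∫ τ in (u+1)..v, φ τ) = ∫ τ in u..v, φ τ :=
        intervalIntegral.integral_add_adjacent_intervals (hφint u (u+1) hu (by linarith))
          (hφint (u+1) v (by linarith) hc.le)
      nlinarith

private lemma contA (Λ Λ' : ℝ → ℝ)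
    (hΛ'int : ∀ s t : ℝ, 0 ≤ s → s ≤ t → IntervalIntegrable Λ' volume s t)
    (hFTC : ∀ s t : ℝ, 0 ≤ s → s ≤ t → Λ t - Λ s = ∫ τ in s..t, Λ' τ) :
    ∀ a b : ℝ, 0 ≤ a → ContinuousOn Λ (Set.Icc a b) := by
  intro a b ha
  rcases lt_or_ge b a with h | h
  · rw [Set.Icc_eq_empty (not_le.mpr h)]; exact continuousOn_empty _
  · have hb0 : (0:ℝ) ≤ b := ha.trans h
    have hint : IntegrableOn Λ' (Set.uIcc 0 b) volume := by
      rw [Set.uIcc_of_le hb0]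
      exact (intervalIntegrable_iff_integrableOn_Icc_of_le hb0).mp (hΛ'int 0 b le_rfl hb0)
    have h1 : ContinuousOn (fun x => Λ 0 + ∫ τ in (0:ℝ)..x, Λ' τ) (Set.Icc a b) := by
      apply (continuousOn_const.add (intervalIntegral.continuousOn_primitive_interval hint)).mono
      rw [Set.uIcc_of_le hb0]; exact Set.Icc_subset_Icc ha le_rfl
    exact h1.congr (fun t ht => by have := hFTC 0 t le_rfl (ha.trans ht.1); linarith)

private lemma crossing (Λ : ℝ → ℝ)
    (hcont : ∀ a b : ℝ, 0 ≤ a → ContinuousOn Λ (Set.Icc a b))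
    (s t₁ A B : ℝ) (hs : 0 ≤ s) (hst : s ≤ t₁) (hA : Λ s ≤ A) (hB : B ≤ Λ t₁) (hAB : A < B) :
    ∃ u v : ℝ, s ≤ u ∧ u ≤ v ∧ v ≤ t₁ ∧ Λ u = A ∧ Λ v = B ∧
      ∀ τ ∈ Set.Icc u v, A ≤ Λ τ ∧ Λ τ ≤ B := by
  have hC : ContinuousOn Λ (Set.Icc s t₁) := hcont s t₁ hs
  set S : Set ℝ := Set.Icc s t₁ ∩ Λ ⁻¹' Set.Iic A with hS
  have hSne : S.Nonempty := ⟨s, ⟨le_rfl, hst⟩, hA⟩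
  have hSclosed : IsClosed S := hC.preimage_isClosed_of_isClosed isClosed_Icc isClosed_Iic
  have hSbdd : BddAbove S := (bddAbove_Icc (a := s) (b := t₁)).mono Set.inter_subset_left
  set u : ℝ := sSup S with hu_def
  have hu : u ∈ S := hSclosed.csSup_mem hSne hSbdd
  have hus : s ≤ u := hu.1.1
  have hut : u ≤ t₁ := hu.1.2
  have hΛuA : Λ u ≤ A := hu.2
  have hgt : ∀ τ, u < τ → τ ≤ t₁ → A < Λ τ := by
    intro τ h1 h2
    by_contra hle
    push_neg at hle
    have : τ ∈ S := ⟨⟨hus.trans h1.le, h2⟩, hle⟩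
    exact absurd (le_csSup hSbdd this) (not_le.mpr h1)
  set T : Set ℝ := Set.Icc u t₁ ∩ Λ ⁻¹' Set.Ici B with hT
  have hTne : T.Nonempty := ⟨t₁, ⟨hut, le_rfl⟩, hB⟩
  have hTclosed : IsClosed T :=
    (hC.mono (Set.Icc_subset_Icc hus le_rfl)).preimage_isClosed_of_isClosed isClosed_Icc isClosed_Ici
  have hTbdd : BddBelow T := (bddBelow_Icc (a := t₁) (b := u)).mono Set.inter_subset_left
  set v : ℝ := sInf T with hv_def
  have hv : v ∈ T := hTclosed.csInf_mem hTne hTbdd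
  have huv : u ≤ v := hv.1.1
  have hvt : v ≤ t₁ := hv.1.2
  have hΛvB : B ≤ Λ v := hv.2
  have huv' : u < v := lt_of_le_of_ne huv (fun h => by rw [h] at hΛuA; linarith)
  have hlt : ∀ τ, u ≤ τ → τ < v → Λ τ < B := by
    intro τ h1 h2
    by_contra hge
    push_neg at hge
    have : τ ∈ T := ⟨⟨h1, h2.le.trans hvt⟩, hge⟩
    exact absurd (csInf_le hTbdd this) (not_le.mpr h2)
  have hCuv : ContinuousOn Λ (Set.Icc u v) := hC.mono (Set.Icc_subset_Icc hus hvt)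
  -- Λ v = B
  have hΛv : Λ v = B := by
    refine le_antisymm ?_ hΛvB
    have hclos : v ∈ closure (Set.Ico u v) := by
      rw [closure_Ico (ne_of_lt huv')]; exact ⟨huv, le_rfl⟩
    haveI hnb : (nhdsWithin v (Set.Ico u v)).NeBot := mem_closure_iff_nhdsWithin_neBot.mp hclos
    have hcw : Filter.Tendsto Λ (nhdsWithin v (Set.Ico u v)) (nhds (Λ v)) :=
      ((hCuv v ⟨huv, le_rfl⟩).mono Set.Ico_subset_Icc_self)
    exact le_of_tendsto hcw (Filter.eventually_of_mem self_mem_nhdsWithin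
      (fun τ hτ => (hlt τ hτ.1 hτ.2).le))
  -- Λ u = A
  have hΛu : Λ u = A := by
    refine le_antisymm hΛuA ?_
    have hclos : u ∈ closure (Set.Ioc u v) := by
      rw [closure_Ioc (ne_of_lt huv')]; exact ⟨le_rfl, huv⟩
    haveI hnb : (nhdsWithin u (Set.Ioc u v)).NeBot := mem_closure_iff_nhdsWithin_neBot.mp hclos
    have hcw : Filter.Tendsto Λ (nhdsWithin u (Set.Ioc u v)) (nhds (Λ u)) :=
      ((hCuv u ⟨le_rfl, huv⟩).mono Set.Ioc_subset_Icc_self)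
    exact ge_of_tendsto hcw (Filter.eventually_of_mem self_mem_nhdsWithin
      (fun τ hτ => (hgt τ hτ.1 (hτ.2.trans hvt)).le))
  refine ⟨u, v, hus, huv, hvt, hΛu, hΛv, ?_⟩
  intro τ hτ
  constructor
  · rcases eq_or_lt_of_le hτ.1 with h | h
    · rw [← h, hΛu]
    · exact (hgt τ h (hτ.2.trans hvt)).le
  · rcases eq_or_lt_of_le hτ.2 with h | h
    · rw [h, hΛv]
    · exact (hlt τ hτ.1 h).le

private lemma L1 (Λ Λ' φ : ℝ → ℝ)
    (hΛ'int : ∀ s t : ℝ, 0 ≤ s → s ≤ t → IntervalIntegrable Λ' volume s t)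
    (hFTC : ∀ s t : ℝ, 0 ≤ s → s ≤ t → Λ t - Λ s = ∫ τ in s..t, Λ' τ)
    (hφint : ∀ s t : ℝ, 0 ≤ s → s ≤ t → IntervalIntegrable φ volume s t)
    (K ε₀ : ℝ) (hK : 0 ≤ K) (hε₀ : 0 < ε₀)
    (hineq : ∀ ε : ℝ, ε ∈ Set.Ioc 0 ε₀ →
      ∀ᵐ t ∂volume, 0 ≤ t →
        Λ' t + ε * Λ t ≤ K * ε ^ 2 * (Λ t) ^ ((3 : ℝ) / 2) + ε ^ (-(2 : ℝ) / 3) * φ t)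
    (ε : ℝ) (hε : ε ∈ Set.Ioc 0 ε₀)
    (u v m M : ℝ) (hu : 0 ≤ u) (huv : u ≤ v) (hm : 0 < m)
    (hband : ∀ τ ∈ Set.Icc u v, m ≤ Λ τ ∧ Λ τ ≤ M)
    (hcontuv : ContinuousOn Λ (Set.Icc u v))
    (hsmall : K * ε * Real.sqrt M ≤ 1/2) :
    Λ v - Λ u ≤ -(ε/2) * m * (v - u) + ε ^ (-(2:ℝ)/3) * ∫ τ in u..v, φ τ := by
  have hεpos : 0 < ε := hε.1
  set g : ℝ → ℝ := fun t => K * ε^2 * (Λ t) ^ ((3:ℝ)/2) - ε * Λ t + ε ^ (-(2:ℝ)/3) * φ t with hg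
  have hcont' : ContinuousOn Λ (Set.uIcc u v) := by rw [Set.uIcc_of_le huv]; exact hcontuv
  have hI1 : IntervalIntegrable (fun t => K * ε^2 * (Λ t) ^ ((3:ℝ)/2) - ε * Λ t) volume u v := by
    apply ContinuousOn.intervalIntegrable
    exact (continuousOn_const.mul (hcont'.rpow_const (fun x _ => Or.inr (by norm_num)))).sub
      (continuousOn_const.mul hcont')
  have hgint : IntervalIntegrable g volume u v := hI1.add ((hφint u v hu huv).const_mul _)
  have step1 : Λ v - Λ u = ∫ τ in u..v, Λ' τ := hFTC u v hu huv
  have step2 : (∫ τ in u..v, Λ' τ) ≤ ∫ τ in u..v, g τ := by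
    apply intervalIntegral.integral_mono_ae_restrict huv (hΛ'int u v hu huv) hgint
    have h1 : ∀ᵐ t ∂(volume.restrict (Set.Icc u v)), 0 ≤ t →
        Λ' t + ε * Λ t ≤ K * ε ^ 2 * (Λ t) ^ ((3 : ℝ) / 2) + ε ^ (-(2 : ℝ) / 3) * φ t :=
      ae_restrict_of_ae (hineq ε hε)
    have h2 : ∀ᵐ t ∂(volume.restrict (Set.Icc u v)), t ∈ Set.Icc u v :=
      ae_restrict_mem measurableSet_Icc
    filter_upwards [h1, h2] with t ht htm
    have := ht (hu.trans htm.1)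
    simp only [hg]
    linarith
  have hRint : IntervalIntegrable (fun t => -(ε/2) * m + ε ^ (-(2:ℝ)/3) * φ t) volume u v :=
    (intervalIntegrable_const).add ((hφint u v hu huv).const_mul _)
  have step3 : (∫ τ in u..v, g τ) ≤ ∫ τ in u..v, (-(ε/2) * m + ε ^ (-(2:ℝ)/3) * φ τ) := by
    apply intervalIntegral.integral_mono_on huv hgint hRint
    intro x hx
    have hb := hband x hx
    have hx0 : 0 < Λ x := lt_of_lt_of_le hm hb.1
    have hM0 : 0 ≤ M := (hx0.le).trans hb.2
    have h32 : (Λ x) ^ ((3:ℝ)/2) = Real.sqrt (Λ x) * Λ x := by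
      rw [show (3:ℝ)/2 = 1/2 + 1 by norm_num, Real.rpow_add hx0, Real.rpow_one,
        ← Real.sqrt_eq_rpow]
    have hsq : Real.sqrt (Λ x) ≤ Real.sqrt M := Real.sqrt_le_sqrt hb.2
    have hkey : K * ε^2 * ((Λ x) ^ ((3:ℝ)/2)) ≤ (ε/2) * Λ x := by
      rw [h32]
      calc K * ε^2 * (Real.sqrt (Λ x) * Λ x) = (K * ε * Real.sqrt (Λ x)) * (ε * Λ x) := by ring
        _ ≤ (1/2) * (ε * Λ x) := by
            apply mul_le_mul_of_nonneg_right _ (by positivity)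
            exact le_trans (mul_le_mul_of_nonneg_left hsq (by positivity)) hsmall
        _ = (ε/2) * Λ x := by ring
    have hmono : (ε/2) * m ≤ (ε/2) * Λ x := mul_le_mul_of_nonneg_left hb.1 (by positivity)
    simp only [hg]
    linarith
  have step4 : (∫ τ in u..v, (-(ε/2) * m + ε ^ (-(2:ℝ)/3) * φ τ))
      = -(ε/2) * m * (v - u) + ε ^ (-(2:ℝ)/3) * ∫ τ in u..v, φ τ := by
    rw [intervalIntegral.integral_add (intervalIntegrable_const) ((hφint u v hu huv).const_mul _),
      intervalIntegral.integral_const, intervalIntegral.integral_const_mul]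
    simp [smul_eq_mul]
    ring
  linarith
private lemma keyB (c Q B : ℝ) (hc : 0 < c) (hQ : 0 ≤ Q) (hB1 : 1 ≤ B)
    (hBlow : (8*Q+1)^6 / c^10 ≤ B) :
    (c / Real.sqrt B) ^ (-(2:ℝ)/3) * Q ≤ (c / Real.sqrt B) * B / 8 := by
  have hBpos : (0:ℝ) < B := lt_of_lt_of_le one_pos hB1
  have hsB : Real.sqrt B = B ^ ((1:ℝ)/2) := Real.sqrt_eq_rpow B
  have hx : c / Real.sqrt B = c * B ^ (-((1:ℝ)/2)) := by
    rw [hsB, Real.rpow_neg hBpos.le, div_eq_mul_inv]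
  have hxpos : 0 < c / Real.sqrt B := by positivity
  have h16 : ((8*Q+1)^6 / c^10) ^ ((1:ℝ)/6) ≤ B ^ ((1:ℝ)/6) :=
    Real.rpow_le_rpow (by positivity) hBlow (by norm_num)
  have hclhs : ((8*Q+1)^6 / c^10) ^ ((1:ℝ)/6) = (8*Q+1) / c ^ ((5:ℝ)/3) := by
    rw [Real.div_rpow (by positivity) (by positivity)]
    congr 1
    · rw [← Real.rpow_natCast (8*Q+1) 6, ← Real.rpow_mul (by positivity)]
      norm_num
    · rw [← Real.rpow_natCast c 10, ← Real.rpow_mul hc.le]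
      norm_num
  have hc53 : (0:ℝ) < c ^ ((5:ℝ)/3) := Real.rpow_pos_of_pos hc _
  have h8Q : 8*Q + 1 ≤ c ^ ((5:ℝ)/3) * B ^ ((1:ℝ)/6) := by
    rw [hclhs] at h16
    rw [div_le_iff₀ hc53] at h16
    nlinarith
  have hBB : B ^ (-((1:ℝ)/2) * ((5:ℝ)/3)) * B = B ^ ((1:ℝ)/6) := by
    nth_rewrite 2 [← Real.rpow_one B]
    rw [← Real.rpow_add hBpos]
    norm_num
  have hx53 : (c / Real.sqrt B) ^ ((5:ℝ)/3) * B / 8 = c ^ ((5:ℝ)/3) * B ^ ((1:ℝ)/6) / 8 := by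
    calc (c / Real.sqrt B) ^ ((5:ℝ)/3) * B / 8
        = (c ^ ((5:ℝ)/3) * B ^ (-((1:ℝ)/2) * ((5:ℝ)/3))) * B / 8 := by
          rw [hx, Real.mul_rpow hc.le (Real.rpow_nonneg hBpos.le _), ← Real.rpow_mul hBpos.le]
      _ = c ^ ((5:ℝ)/3) * (B ^ (-((1:ℝ)/2) * ((5:ℝ)/3)) * B) / 8 := by ring
      _ = c ^ ((5:ℝ)/3) * B ^ ((1:ℝ)/6) / 8 := by rw [hBB]
  have h1 : Q ≤ (c / Real.sqrt B) ^ ((5:ℝ)/3) * B / 8 := by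
    rw [hx53]; linarith
  calc (c / Real.sqrt B) ^ (-(2:ℝ)/3) * Q
      ≤ (c / Real.sqrt B) ^ (-(2:ℝ)/3) * ((c / Real.sqrt B) ^ ((5:ℝ)/3) * B / 8) :=
        mul_le_mul_of_nonneg_left h1 (Real.rpow_nonneg hxpos.le _)
    _ = ((c / Real.sqrt B) ^ (-(2:ℝ)/3) * (c / Real.sqrt B) ^ ((5:ℝ)/3)) * B / 8 := by ring
    _ = (c / Real.sqrt B) * B / 8 := by
        rw [← Real.rpow_add hxpos]
        norm_num
set_option maxHeartbeats 4000000 in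
/-- Gronwall-type lemma with parameter (Lemma 2.2 / `superl`).
`Λ` is absolutely continuous on every compact subinterval of `[0,∞)`, encoded via an
a.e. derivative `Λ'` satisfying the fundamental theorem of calculus,
`φ` is locally integrable with translation-bounded integral `≤ Q`, and for every
`ε ∈ (0, ε₀]` the differential inequality
`Λ' t + ε * Λ t ≤ K * ε^2 * (Λ t)^(3/2) + ε^(-2/3) * φ t` holds for a.e. `t ≥ 0`.
Then there are `R₁ > 0`, `κ > 0` such that `Λ(0) ≤ R` implies `Λ(t) ≤ R₁` for every
`t ≥ R^(1/κ) * (1 + κ * Q)⁻¹`. -/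
theorem stmt_0
    (Λ Λ' φ : ℝ → ℝ)
    (hΛnn : ∀ t, 0 ≤ t → 0 ≤ Λ t)
    (hφnn : ∀ t, 0 ≤ t → 0 ≤ φ t)
    (hΛ'int : ∀ s t : ℝ, 0 ≤ s → s ≤ t → IntervalIntegrable Λ' volume s t)
    (hFTC : ∀ s t : ℝ, 0 ≤ s → s ≤ t → Λ t - Λ s = ∫ τ in s..t, Λ' τ)
    (hφint : ∀ s t : ℝ, 0 ≤ s → s ≤ t → IntervalIntegrable φ volume s t)
    (Q : ℝ) (hQ : 0 ≤ Q)
    (hφQ : ∀ t : ℝ, 0 ≤ t → (∫ τ in t..(t + 1), φ τ) ≤ Q)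
    (K ε₀ : ℝ) (hK : 0 ≤ K) (hε₀ : 0 < ε₀)
    (hineq : ∀ ε : ℝ, ε ∈ Set.Ioc 0 ε₀ →
      ∀ᵐ t ∂volume, 0 ≤ t →
        Λ' t + ε * Λ t ≤ K * ε ^ 2 * (Λ t) ^ ((3 : ℝ) / 2) + ε ^ (-(2 : ℝ) / 3) * φ t) :
    ∃ R₁ > (0 : ℝ), ∃ κ > (0 : ℝ), ∀ R : ℝ, 0 ≤ R → Λ 0 ≤ R →
      ∀ t : ℝ, R ^ ((1 : ℝ) / κ) * (1 + κ * Q)⁻¹ ≤ t → Λ t ≤ R₁ := by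
  -- basic constants
  obtain ⟨c, hc, hcε₀, hc1, hcK⟩ :
      ∃ c : ℝ, 0 < c ∧ c ≤ ε₀ ∧ c ≤ 1 ∧ c * (6*K+1) ≤ 1 := by
    refine ⟨min (min ε₀ 1) (1/(6*K+1)), lt_min (lt_min hε₀ one_pos) (by positivity),
      (min_le_left _ _).trans (min_le_left _ _),
      (min_le_left _ _).trans (min_le_right _ _), ?_⟩
    have h := min_le_right (min ε₀ 1) (1/(6*K+1))
    rw [le_div_iff₀ (by positivity)] at h
    exact h
  obtain ⟨ε, hε_def⟩ : ∃ ε : ℝ → ℝ, ∀ B, ε B = c / Real.sqrt B := ⟨_, fun _ => rfl⟩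
  have hεpos : ∀ B, 1 ≤ B → 0 < ε B := by
    intro B hB
    have h1 : 0 < Real.sqrt B := Real.sqrt_pos.mpr (by linarith)
    rw [hε_def]
    positivity
  have hεIoc : ∀ B, 1 ≤ B → ε B ∈ Set.Ioc 0 ε₀ := by
    intro B hB
    refine ⟨hεpos B hB, le_trans ?_ hcε₀⟩
    rw [hε_def]
    exact div_le_self hc.le (Real.one_le_sqrt.mpr hB)
  have hε1 : ∀ B, 1 ≤ B → ε B ≤ 1 := by
    intro B hB
    refine le_trans ?_ hc1
    rw [hε_def]
    exact div_le_self hc.le (Real.one_le_sqrt.mpr hB)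
  have hsmallAll : ∀ B, 1 ≤ B → K * ε B * Real.sqrt (8*B) ≤ 1/2 := by
    intro B hB
    have hBpos : (0:ℝ) < B := by linarith
    have hsB : 0 < Real.sqrt B := Real.sqrt_pos.mpr hBpos
    have h8 : Real.sqrt (8*B) = Real.sqrt 8 * Real.sqrt B := Real.sqrt_mul (by norm_num) B
    have h83 : Real.sqrt 8 ≤ 3 := by
      nlinarith [Real.sq_sqrt (show (0:ℝ) ≤ 8 by norm_num), Real.sqrt_nonneg 8]
    have heq : K * ε B * Real.sqrt (8*B) = K * c * Real.sqrt 8 := by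
      rw [hε_def, h8]
      field_simp
    rw [heq]
    have h1 : K * c * Real.sqrt 8 ≤ K * c * 3 :=
      mul_le_mul_of_nonneg_left h83 (by positivity)
    have h2 : 6*(K*c) + c ≤ 1 := by nlinarith
    nlinarith
  -- the threshold
  obtain ⟨B₀, hB₀1, hkey₀⟩ :
      ∃ B₀ : ℝ, (1:ℝ) ≤ B₀ ∧ ∀ B, B₀ ≤ B → (8*Q+1)^6 / c^10 ≤ B := by
    refine ⟨max 1 ((8*Q+1)^6 / c^10), le_max_left _ _, fun B hB => (le_max_right _ _).trans hB⟩
  have hB₀pos : (0:ℝ) < B₀ := by linarith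
  have key : ∀ B, B₀ ≤ B → ε B ^ (-(2:ℝ)/3) * Q ≤ ε B * B / 8 := by
    intro B hB
    have hB1 : 1 ≤ B := hB₀1.trans hB
    rw [hε_def]
    exact keyB c Q B hc hQ hB1 (hkey₀ B hB)
  -- continuity and φ integral bound
  have hcont := contA Λ Λ' hΛ'int hFTC
  have hφB : ∀ u v : ℝ, 0 ≤ u → u ≤ v → (∫ τ in u..v, φ τ) ≤ Q * (v - u + 1) := by
    intro u v hu huv
    exact phiB φ hφnn hφint Q hQ hφQ ⌈v - u⌉₊ u v hu huv (Nat.le_ceil _)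
  -- no-escape lemma
  have noesc : ∀ B s, B₀ ≤ B → 0 ≤ s → Λ s ≤ 2*B → ∀ t, s ≤ t → Λ t ≤ 4*B := by
    intro B s hB hs hΛs
    by_contra hcon
    push_neg at hcon
    obtain ⟨t₁, hst₁, ht₁⟩ := hcon
    have hB1 : 1 ≤ B := hB₀1.trans hB
    have hBpos : (0:ℝ) < B := by linarith
    obtain ⟨u, v, hsu, huv, hvt₁, hΛu, hΛv, hband⟩ :=
      crossing Λ hcont s t₁ (2*B) (4*B) hs hst₁ hΛs ht₁.le (by linarith)
    have hu0 : 0 ≤ u := hs.trans hsu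
    have hband' : ∀ τ ∈ Set.Icc u v, 2*B ≤ Λ τ ∧ Λ τ ≤ 8*B := fun τ hτ =>
      ⟨(hband τ hτ).1, le_trans (hband τ hτ).2 (by linarith)⟩
    have hest := L1 Λ Λ' φ hΛ'int hFTC hφint K ε₀ hK hε₀ hineq (ε B) (hεIoc B hB1)
      u v (2*B) (8*B) hu0 huv (by linarith) hband' (hcont u v hu0) (hsmallAll B hB1)
    rw [hΛu, hΛv] at hest
    have hφb := hφB u v hu0 huv
    have hεB := hεpos B hB1
    have hεB1 := hε1 B hB1
    have hk := key B hB
    have hd0 : 0 ≤ v - u := by linarith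
    have c1 : ε B ^ (-(2:ℝ)/3) * (∫ τ in u..v, φ τ) ≤ ε B ^ (-(2:ℝ)/3) * (Q * (v-u+1)) :=
      mul_le_mul_of_nonneg_left hφb (Real.rpow_nonneg hεB.le _)
    have c2 : ε B ^ (-(2:ℝ)/3) * Q * (v-u+1) ≤ (ε B * B / 8) * (v-u+1) :=
      mul_le_mul_of_nonneg_right hk (by linarith)
    nlinarith [mul_nonneg (mul_nonneg hεB.le hBpos.le) hd0,
      mul_nonneg (sub_nonneg.mpr hεB1) hBpos.le]
  -- descent lemma
  have desc : ∀ B s, B₀ ≤ B → 0 ≤ s → Λ s ≤ 4*B →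
      ∃ w, s ≤ w ∧ w ≤ s + 4 / ε B ∧ Λ w ≤ 2*B := by
    intro B s hB hs hΛs
    by_contra hcon
    push_neg at hcon
    have hB1 : 1 ≤ B := hB₀1.trans hB
    have hBpos : (0:ℝ) < B := by linarith
    have hεB := hεpos B hB1
    have hεB1 := hε1 B hB1
    have hT : 0 < 4 / ε B := by positivity
    have hup : ∀ t, s ≤ t → Λ t ≤ 8*B := by
      intro t hst
      have := noesc (2*B) s (by linarith) hs (by linarith) t hst
      linarith
    have hband : ∀ τ ∈ Set.Icc s (s + 4/ε B), 2*B ≤ Λ τ ∧ Λ τ ≤ 8*B := by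
      intro τ hτ
      exact ⟨(hcon τ hτ.1 hτ.2).le, hup τ hτ.1⟩
    have hest := L1 Λ Λ' φ hΛ'int hFTC hφint K ε₀ hK hε₀ hineq (ε B) (hεIoc B hB1)
      s (s + 4/ε B) (2*B) (8*B) hs (by linarith) (by linarith) hband
      (hcont s (s + 4/ε B) hs) (hsmallAll B hB1)
    have hφb := hφB s (s + 4/ε B) hs (by linarith)
    have hend : 2*B < Λ (s + 4/ε B) := hcon _ (by linarith) le_rfl
    have hstart : Λ s ≤ 4*B := hΛs
    have hk := key B hB
    have hεT : ε B * (4 / ε B) = 4 := by field_simp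
    have c1 : ε B ^ (-(2:ℝ)/3) * (∫ τ in s..(s + 4/ε B), φ τ)
        ≤ ε B ^ (-(2:ℝ)/3) * (Q * ((s + 4/ε B) - s + 1)) :=
      mul_le_mul_of_nonneg_left hφb (Real.rpow_nonneg hεB.le _)
    have c2 : ε B ^ (-(2:ℝ)/3) * Q * ((s + 4/ε B) - s + 1)
        ≤ (ε B * B / 8) * ((s + 4/ε B) - s + 1) :=
      mul_le_mul_of_nonneg_right hk (by nlinarith)
    have hεTB : ε B * (4 / ε B) * B = 4 * B := by rw [hεT]
    nlinarith [mul_nonneg (sub_nonneg.mpr hεB1) hBpos.le]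
  -- time scale
  obtain ⟨T₀, hT₀_def⟩ : ∃ T₀ : ℝ, T₀ = 4 * Real.sqrt B₀ / c := ⟨_, rfl⟩
  have hsB₀ : (0:ℝ) < Real.sqrt B₀ := Real.sqrt_pos.mpr hB₀pos
  have hT₀pos : 0 < T₀ := by rw [hT₀_def]; positivity
  have hTeq : ∀ k : ℕ, 4 / ε ((2:ℝ)^k * B₀) = T₀ * (Real.sqrt 2)^k := by
    intro k
    have h2k : (0:ℝ) < (2:ℝ)^k := by positivity
    have hs2 : (0:ℝ) < Real.sqrt 2 := Real.sqrt_pos.mpr (by norm_num)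
    rw [hε_def, hT₀_def, Real.sqrt_mul (le_of_lt h2k) B₀, sqrt_pow_eq 2 (by norm_num) k]
    have hane : ((Real.sqrt 2)^k : ℝ) ≠ 0 := by positivity
    field_simp
  -- main induction on dyadic levels
  have main : ∀ k : ℕ, ∀ s, 0 ≤ s → Λ s ≤ 4*((2:ℝ)^k * B₀) →
      ∀ t, s + 5*T₀*(Real.sqrt 2)^k ≤ t → Λ t ≤ 4*B₀ := by
    intro k
    induction k with
    | zero =>
      intro s hs hΛs t ht
      simp only [pow_zero, one_mul, mul_one] at hΛs ht
      obtain ⟨w, hsw, hwT, hΛw⟩ := desc B₀ s le_rfl hs hΛs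
      have hT0 := hTeq 0
      simp only [pow_zero, one_mul, mul_one] at hT0
      have hwT' : w ≤ s + T₀ := by rw [hT0] at hwT; exact hwT
      exact noesc B₀ w le_rfl (hs.trans hsw) hΛw t (by linarith)
    | succ k ih =>
      intro s hs hΛs t ht
      have h2k1 : (1:ℝ) ≤ (2:ℝ)^(k+1) := one_le_pow₀ (by norm_num)
      have hB' : B₀ ≤ (2:ℝ)^(k+1) * B₀ := by nlinarith
      obtain ⟨w, hsw, hwT, hΛw⟩ := desc ((2:ℝ)^(k+1) * B₀) s hB' hs hΛs
      rw [hTeq (k+1)] at hwT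
      have hΛw' : Λ w ≤ 4*((2:ℝ)^k * B₀) := by
        have heq : 2*((2:ℝ)^(k+1)*B₀) = 4*((2:ℝ)^k*B₀) := by ring
        linarith
      apply ih w (hs.trans hsw) hΛw' t
      have hsqrt2 : (1.25:ℝ) ≤ Real.sqrt 2 := by
        nlinarith [Real.sq_sqrt (show (0:ℝ) ≤ 2 by norm_num), Real.sqrt_nonneg 2]
      have hpow : (0:ℝ) ≤ (Real.sqrt 2)^k := by positivity
      have h45 : (0:ℝ) ≤ 4*Real.sqrt 2 - 5 := by linarith
      have hstep : T₀*(Real.sqrt 2)^(k+1) + 5*T₀*(Real.sqrt 2)^k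
          ≤ 5*T₀*(Real.sqrt 2)^(k+1) := by
        have hps : (Real.sqrt 2)^(k+1) = Real.sqrt 2 * (Real.sqrt 2)^k := by ring
        rw [hps]
        nlinarith [mul_nonneg (mul_nonneg hT₀pos.le hpow) h45]
      linarith
  -- conclusion
  obtain ⟨Bs, hBs_def⟩ : ∃ Bs : ℝ, Bs = B₀ + (5*T₀*(1+Q))^2 := ⟨_, rfl⟩
  have hBsB₀ : B₀ ≤ Bs := by rw [hBs_def]; nlinarith [sq_nonneg (5*T₀*(1+Q))]
  have hBspos : 0 < Bs := by linarith
  refine ⟨4*Bs, by linarith, 1, one_pos, ?_⟩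
  intro R hR hΛ0 t ht
  have hQ1 : (0:ℝ) < 1 + Q := by linarith
  have ht' : R / (1+Q) ≤ t := by
    rw [show ((1:ℝ)/1) = 1 by norm_num, Real.rpow_one, one_mul, ← div_eq_mul_inv] at ht
    exact ht
  have ht0 : 0 ≤ t := le_trans (by positivity) ht'
  rcases le_or_gt R (2*Bs) with hcase | hcase
  · have := noesc Bs 0 hBsB₀ le_rfl (by linarith) t ht0
    linarith
  · obtain ⟨x, hx_def⟩ : ∃ x : ℝ, x = R / (4*B₀) := ⟨_, rfl⟩
    have hx2 : (1:ℝ)/2 < x := by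
      rw [hx_def, lt_div_iff₀ (by positivity)]
      linarith
    obtain ⟨k, hk1, hk2⟩ : ∃ k : ℕ, x ≤ (2:ℝ)^k ∧ (2:ℝ)^k ≤ 2*x := by
      rcases le_or_gt x 1 with h | h
      · exact ⟨0, by simpa using h, by norm_num; linarith⟩
      · obtain ⟨n, hn1, hn2⟩ := exists_nat_pow_near h.le one_lt_two
        refine ⟨n+1, hn2.le, ?_⟩
        rw [pow_succ]
        linarith
    have hRx : R = 4*B₀*x := by
      rw [hx_def]
      field_simp
    have hΛ0' : Λ 0 ≤ 4*((2:ℝ)^k * B₀) := by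
      nlinarith [mul_le_mul_of_nonneg_left hk1 (show (0:ℝ) ≤ 4*B₀ by positivity)]
    have hsq2k : (Real.sqrt 2)^k = Real.sqrt ((2:ℝ)^k) := (sqrt_pow_eq 2 (by norm_num) k).symm
    have h1 : Real.sqrt ((2:ℝ)^k) ≤ Real.sqrt (2*x) := Real.sqrt_le_sqrt hk2
    have h2 : Real.sqrt (2*x) = Real.sqrt (R/(2*B₀)) := by
      rw [hx_def]
      congr 1
      field_simp
      ring
    have h3 : Real.sqrt (R/(2*B₀)) ≤ Real.sqrt R := by
      apply Real.sqrt_le_sqrt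
      rw [div_le_iff₀ (by positivity)]
      nlinarith
    have hsR : 5*T₀*(1+Q) ≤ Real.sqrt R := by
      have hsq : (5*T₀*(1+Q))^2 ≤ R := by rw [hBs_def] at hcase; nlinarith
      calc 5*T₀*(1+Q) = Real.sqrt ((5*T₀*(1+Q))^2) := (Real.sqrt_sq (by positivity)).symm
        _ ≤ Real.sqrt R := Real.sqrt_le_sqrt hsq
    have hsRnn : 0 ≤ Real.sqrt R := Real.sqrt_nonneg R
    have hRe : Real.sqrt R * Real.sqrt R = R := Real.mul_self_sqrt hR
    have e1 : 5*T₀*(Real.sqrt 2)^k ≤ 5*T₀*Real.sqrt R := by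
      apply mul_le_mul_of_nonneg_left _ (by positivity)
      rw [hsq2k]
      exact h1.trans (h2.le.trans h3)
    have e2 : 5*T₀*Real.sqrt R ≤ R/(1+Q) := by
      rw [le_div_iff₀ hQ1]
      nlinarith [mul_le_mul_of_nonneg_left hsR hsRnn]
    have := main k 0 le_rfl hΛ0' t (by linarith)
    linarith
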